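/- Let θ > 0, W_F ∈ ℝ, and α₀, α₁ ∈ ℝ with α₀ > |α₁|. For each integer N ≥ 1 define the periodic quadratic form Q_N(v) := Σ_{j ∈ ℤ/Nℤ} (α₀ v_j² + α₁ v_j v_{j+1}) on ℝ^N and the free energy per atom W_{θ,N} := −(θ/N) log( ∫_{ℝ^N} exp(−θ⁻¹(N·W_F + Q_N(v))) dv ). Then lim_{N→∞} W_{θ,N} = W_F + (θ/2) log(1/(πθ)) + (θ/2) log((α₀ + √(α₀² − α₁²))/2). -/

import Mathlib

open MeasureTheory Matrix Finset Filter Real Polynomial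

namespace Stmt15

noncomputable def Amat (α₀ α₁ : ℝ) (N : ℕ) [NeZero N] : Matrix (Fin N) (Fin N) ℝ :=
  fun i j => α₀ * (if i = j then 1 else 0) + α₁ / 2 * (if j = i + 1 then 1 else 0)
    + α₁ / 2 * (if i = j + 1 then 1 else 0)

variable {α₀ α₁ : ℝ} {N : ℕ} [NeZero N]

theorem Amat_isHermitian : (Amat α₀ α₁ N).IsHermitian := by
  ext i j
  simp only [Matrix.conjTranspose_apply, Amat, star_trivial]
  simp only [show (j = i) ↔ (i = j) from eq_comm]
  ring

theorem mulVec_Amat (v : Fin N → ℝ) (i : Fin N) :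
    ((Amat α₀ α₁ N) *ᵥ v) i = α₀ * v i + α₁ / 2 * v (i + 1) + α₁ / 2 * v (i - 1) := by
  simp only [Amat, mulVec, dotProduct, add_mul, ite_mul, one_mul, zero_mul, mul_ite, mul_zero]
  rw [Finset.sum_add_distrib, Finset.sum_add_distrib]
  congr 1
  · congr 1 <;> simp
  · have : ∀ m : Fin N, (i = m + 1) ↔ (m = i - 1) := by
      intro m; constructor
      · intro h; simp [h]
      · intro h; simp [h]
    simp only [this]; simp

theorem sum_shift (f : Fin N → Fin N → ℝ) : ∑ i : Fin N, f i (i - 1) = ∑ i, f (i + 1) i := by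
  apply Finset.sum_nbij' (fun i => i - 1) (fun i => i + 1) <;> simp

theorem quadform_eq (v : Fin N → ℝ) :
    v ⬝ᵥ (Amat α₀ α₁ N) *ᵥ v = ∑ j : Fin N, (α₀ * v j ^ 2 + α₁ * v j * v (j + 1)) := by
  simp only [dotProduct, mulVec_Amat]
  have := sum_shift (N := N) (fun i j => v i * (α₁ / 2 * v j))
  calc ∑ i, v i * (α₀ * v i + α₁ / 2 * v (i + 1) + α₁ / 2 * v (i - 1))
      = (∑ i, (α₀ * v i ^ 2 + α₁ / 2 * v i * v (i + 1))) + ∑ i, v i * (α₁ / 2 * v (i - 1)) := by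
        rw [← Finset.sum_add_distrib]; congr 1; ext i; ring
    _ = (∑ i, (α₀ * v i ^ 2 + α₁ / 2 * v i * v (i + 1))) + ∑ i, v (i + 1) * (α₁ / 2 * v i) := by
        rw [this]
    _ = _ := by rw [← Finset.sum_add_distrib]; congr 1; ext i; ring

theorem quad_lower (v : Fin N → ℝ) :
    (α₀ - |α₁|) * ∑ i, v i ^ 2 ≤ v ⬝ᵥ (Amat α₀ α₁ N) *ᵥ v := by
  rw [quadform_eq]
  have hsq : ∑ i : Fin N, v (i + 1) ^ 2 = ∑ i, v i ^ 2 := by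
    apply Finset.sum_nbij' (fun i => i + 1) (fun i => i - 1) <;> simp
  have hsq2 : ∑ i : Fin N, |α₁| / 2 * v (i + 1) ^ 2 = ∑ i, |α₁| / 2 * v i ^ 2 := by
    rw [← Finset.mul_sum, hsq, Finset.mul_sum]
  rw [← sub_nonneg]
  have e1 : ∑ i, (α₀ * v i ^ 2 + α₁ * v i * v (i + 1)) - (α₀ - |α₁|) * ∑ i, v i ^ 2
      = ∑ i, (|α₁| / 2 * v i ^ 2 + |α₁| / 2 * v (i + 1) ^ 2 + α₁ * v i * v (i + 1)) := by
    rw [Finset.mul_sum, ← Finset.sum_sub_distrib, Finset.sum_add_distrib,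
      Finset.sum_add_distrib, hsq2, ← Finset.sum_add_distrib, ← Finset.sum_add_distrib]
    apply Finset.sum_congr rfl; intro i _; ring
  rw [e1]
  apply Finset.sum_nonneg
  intro i _
  have h2 : |v i * v (i + 1)| ≤ (v i ^ 2 + v (i + 1) ^ 2) / 2 := by
    rw [abs_mul]
    nlinarith [sq_nonneg (|v i| - |v (i + 1)|), sq_abs (v i), sq_abs (v (i + 1))]
  have h3 := mul_le_mul_of_nonneg_left h2 (abs_nonneg α₁)
  have h1 : -(|α₁| * |v i * v (i + 1)|) ≤ α₁ * (v i * v (i + 1)) := by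
    rw [← abs_mul]; exact neg_abs_le _
  nlinarith

theorem Amat_posDef (h : |α₁| < α₀) : (Amat α₀ α₁ N).PosDef := by
  refine Matrix.PosDef.of_dotProduct_mulVec_pos Amat_isHermitian fun v hv => ?_
  simp only [star_trivial, RCLike.re_to_real]
  have h1 := quad_lower (α₀ := α₀) (α₁ := α₁) v
  have h2 : 0 < ∑ i, v i ^ 2 := by
    obtain ⟨i, hi⟩ := Function.ne_iff.mp hv
    apply Finset.sum_pos' (fun j _ => sq_nonneg _) ⟨i, Finset.mem_univ i, by exact pow_pos (abs_pos.mpr hi) 2 |>.trans_eq (sq_abs _)⟩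
  nlinarith


theorem prod_lin (hN : N ≠ 0) {ζ : ℂ} (hprim : IsPrimitiveRoot ζ N) (a b : ℂ) :
    ∏ k : Fin N, (a + b * ζ ^ (k : ℕ)) = a ^ N - (-b) ^ N := by
  have hpos : 0 < N := Nat.pos_of_ne_zero hN
  rw [hprim.pow_sub_pow_eq_prod_sub_mul (x := a) (y := -b) hpos]
  apply Finset.prod_bij (fun (k : Fin N) _ => ζ ^ (k : ℕ))
  · intro k _
    rw [Polynomial.mem_nthRootsFinset hpos, ← pow_mul, mul_comm, pow_mul, hprim.pow_eq_one,
      one_pow]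
  · intro k _ l _ hkl
    exact Fin.ext (hprim.pow_inj k.isLt l.isLt hkl)
  · intro ξ hξ
    obtain ⟨i, hi, hie⟩ := hprim.eq_pow_of_pow_eq_one
      ((Polynomial.mem_nthRootsFinset hpos 1).mp hξ)
    exact ⟨⟨i, hi⟩, Finset.mem_univ _, hie⟩
  · intro k _; ring

theorem det_Amat {s t : ℝ} (h1 : s ^ 2 + t ^ 2 = α₀) (h2 : s * t = α₁ / 2) :
    (Amat α₀ α₁ N).det = (s ^ N - (-t) ^ N) ^ 2 := by
  have hN : N ≠ 0 := NeZero.ne N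
  have hNpos : 0 < N := Nat.pos_of_ne_zero hN
  set ω : ℂ := Complex.exp (2 * ↑π * Complex.I / N) with hω
  have hprim : IsPrimitiveRoot ω N := Complex.isPrimitiveRoot_exp N hN
  have hω1 : ω ^ N = 1 := hprim.pow_eq_one
  have hmod : ∀ a : ℕ, ω ^ a = ω ^ (a % N) := by
    intro a
    conv_lhs => rw [← Nat.div_add_mod a N]
    rw [pow_add, pow_mul, hω1, one_pow, one_mul]
  have hmodeq : ∀ a b : ℕ, a ≡ b [MOD N] → ω ^ a = ω ^ b := by
    intro a b hab
    rw [hmod a, hmod b, hab]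
  have hωne : ω ≠ 0 := Complex.exp_ne_zero _
  have habs : (starRingEnd ℂ) ω * ω = 1 := by
    rw [hω, ← Complex.exp_conj, ← Complex.exp_add]
    rw [show (starRingEnd ℂ) (2 * ↑π * Complex.I / N) = -(2 * ↑π * Complex.I / N) by
      simp only [map_div₀, _root_.map_mul, Complex.conj_I, Complex.conj_ofReal, map_ofNat,
        Complex.conj_natCast]
      ring]
    simp
  have hconjprim : IsPrimitiveRoot ((starRingEnd ℂ) ω) N :=
    hprim.map_of_injective (RingHom.injective _)
  -- the modular shift identity
  have hsucc : ∀ (x : Fin N) (k : Fin N),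
      ω ^ (((x + 1 : Fin N) : ℕ) * (k : ℕ)) = ω ^ ((x : ℕ) * (k : ℕ)) * ω ^ (k : ℕ) := by
    intro x k
    have hv : ((x + 1 : Fin N) : ℕ) ≡ (x : ℕ) + 1 [MOD N] := by
      rw [Fin.add_def]
      exact (Nat.mod_modEq _ N).trans (Nat.ModEq.add_left _ (by rw [Fin.val_one']; exact Nat.mod_modEq 1 N))
    rw [hmodeq _ _ (Nat.ModEq.mul_right (k : ℕ) hv), add_mul, one_mul, pow_add]
  set V : Matrix (Fin N) (Fin N) ℂ := Matrix.vandermonde (fun j : Fin N => ω ^ (j : ℕ)) with hV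
  have hVdet : V.det ≠ 0 := by
    rw [hV, Matrix.det_vandermonde_ne_zero_iff]
    intro a b hab
    exact Fin.ext (hprim.pow_inj a.isLt b.isLt hab)
  set d : Fin N → ℂ := fun k =>
    (↑s + ↑t * ω ^ (k : ℕ)) * (↑s + ↑t * ((starRingEnd ℂ) ω) ^ (k : ℕ)) with hd
  have hα₀ : (α₀ : ℂ) = (s : ℂ) ^ 2 + (t : ℂ) ^ 2 := by rw [← h1]; push_cast; ring
  have hα₁ : (α₁ : ℂ) / 2 = (s : ℂ) * (t : ℂ) := by
    rw [show ((α₁ : ℂ)) / 2 = ((α₁ / 2 : ℝ) : ℂ) by push_cast; ring, ← h2]; push_cast; ring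
  have h7 : ∀ k : Fin N, ((starRingEnd ℂ) ω) ^ (k : ℕ) * ω ^ (k : ℕ) = 1 := by
    intro k; rw [← mul_pow, habs, one_pow]
  have key : (Amat α₀ α₁ N).map (⇑Complex.ofRealHom) * V = V * Matrix.diagonal d := by
    ext j k
    rw [Matrix.mul_apply, Matrix.mul_diagonal]
    have hsum : ∑ m, ((Amat α₀ α₁ N).map (⇑Complex.ofRealHom)) j m * V m k
        = ↑α₀ * V j k + ↑α₁ / 2 * V (j + 1) k + ↑α₁ / 2 * V (j - 1) k := by
      simp only [Matrix.map_apply, Amat, Complex.ofRealHom_eq_coe, Complex.ofReal_add,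
        Complex.ofReal_mul, Complex.ofReal_div, Complex.ofReal_ofNat,
        apply_ite Complex.ofReal, Complex.ofReal_one, Complex.ofReal_zero,
        add_mul, ite_mul, one_mul, zero_mul]
      rw [Finset.sum_add_distrib, Finset.sum_add_distrib]
      congr 1
      · congr 1 <;> simp
      · have : ∀ m : Fin N, (j = m + 1) ↔ (m = j - 1) := by
          intro m; constructor
          · intro h; simp [h]
          · intro h; simp [h]
        simp only [this]; simp
    rw [hsum, hV]
    simp only [Matrix.vandermonde_apply]
    rw [← pow_mul, ← pow_mul, ← pow_mul]
    rw [hsucc j k]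
    have h6 : ω ^ (((j - 1 : Fin N) : ℕ) * (k : ℕ))
        = ω ^ ((j : ℕ) * (k : ℕ)) * ((starRingEnd ℂ) ω) ^ (k : ℕ) := by
      apply mul_right_cancel₀ (pow_ne_zero (k : ℕ) hωne)
      rw [← hsucc (j - 1) k, sub_add_cancel, mul_assoc, h7 k, mul_one]
    rw [h6, hd]
    linear_combination (ω ^ ((j:ℕ) * (k:ℕ))) * hα₀
      + (ω ^ ((j:ℕ) * (k:ℕ)) * (ω ^ (k:ℕ) + ((starRingEnd ℂ) ω) ^ (k:ℕ))) * hα₁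
      - ((t:ℂ)^2 * ω ^ ((j:ℕ) * (k:ℕ))) * (h7 k)
  have hdet := congrArg Matrix.det key
  rw [Matrix.det_mul, Matrix.det_mul, Matrix.det_diagonal] at hdet
  have hcancel : ((Amat α₀ α₁ N).map (⇑Complex.ofRealHom)).det = ∏ k, d k := by
    apply mul_right_cancel₀ hVdet
    rw [hdet]; ring
  have hmapdet : ((Amat α₀ α₁ N).map (⇑Complex.ofRealHom)).det = ((Amat α₀ α₁ N).det : ℂ) :=
    (RingHom.map_det Complex.ofRealHom _).symm
  have hprod : (∏ k, d k) = ((s : ℂ) ^ N - (-(t:ℂ)) ^ N) * ((s : ℂ) ^ N - (-(t:ℂ)) ^ N) := by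
    rw [hd]
    rw [Finset.prod_mul_distrib, prod_lin hN hprim, prod_lin hN hconjprim]
  apply Complex.ofReal_injective
  rw [← hmapdet, hcancel, hprod]
  push_cast
  ring


theorem gauss_integral {n : ℕ} {A : Matrix (Fin n) (Fin n) ℝ} (hA : A.PosDef)
    {c : ℝ} (hc : 0 < c) :
    ∫ v : Fin n → ℝ, Real.exp (-c * (v ⬝ᵥ A *ᵥ v)) =
      ∏ i, Real.sqrt (π / (c * hA.1.eigenvalues i)) := by
  classical
  set hH := hA.1 with hHdef
  set U : Matrix (Fin n) (Fin n) ℝ := (hH.eigenvectorUnitary : Matrix (Fin n) (Fin n) ℝ) with hU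
  set D : Matrix (Fin n) (Fin n) ℝ := Matrix.diagonal (RCLike.ofReal ∘ hH.eigenvalues) with hD
  have hstar : star U = Uᵀ := by
    rw [Matrix.star_eq_conjTranspose]; ext i j; simp [Matrix.conjTranspose_apply]
  have hunit : star U * U = 1 := (Matrix.mem_unitaryGroup_iff').mp hH.eigenvectorUnitary.2
  have hdet2 : U.det * U.det = 1 := by
    have := congrArg Matrix.det hunit
    rwa [Matrix.det_mul, hstar, Matrix.det_transpose, Matrix.det_one] at this
  have hdetne : U.det ≠ 0 := by
    intro h0; rw [h0, mul_zero] at hdet2; exact zero_ne_one hdet2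
  have habs : |U.det⁻¹| = 1 := by
    rcases mul_self_eq_one_iff.mp hdet2 with h | h <;> rw [h] <;> norm_num
  have hquad : ∀ w : Fin n → ℝ, (U *ᵥ w) ⬝ᵥ A *ᵥ (U *ᵥ w) = ∑ i, hH.eigenvalues i * w i ^ 2 := by
    intro w
    conv_lhs => rw [hH.spectral_theorem, Unitary.conjStarAlgAut_apply, ← hD, ← hU]
    rw [Matrix.mulVec_mulVec]
    have h1 : U * D * star U * U = U * D := by rw [mul_assoc, hunit, mul_one]
    rw [h1, Matrix.dotProduct_mulVec, Matrix.vecMul_mulVec, ← mul_assoc, ← hstar, hunit, one_mul, hD]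
    simp only [dotProduct, Matrix.vecMul_diagonal, Function.comp_apply, RCLike.ofReal_real_eq_id,
      id_eq]
    exact Finset.sum_congr rfl fun i _ => by ring
  have hcont : Continuous fun v : Fin n → ℝ => Real.exp (-c * (v ⬝ᵥ A *ᵥ v)) := by
    apply Real.continuous_exp.comp
    apply Continuous.mul continuous_const
    simp only [dotProduct, mulVec]
    exact continuous_finset_sum _ fun i _ => (continuous_apply i).mul
      (continuous_finset_sum _ fun j _ => continuous_const.mul (continuous_apply j))
  have hmap : Measure.map (Matrix.toLin' U) volume = volume := by
    rw [Real.map_matrix_volume_pi_eq_smul_volume_pi hdetne, habs]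
    simp
  have hev : ∀ i, 0 < c * hH.eigenvalues i :=
    fun i => mul_pos hc (hA.eigenvalues_pos i)
  calc ∫ v : Fin n → ℝ, Real.exp (-c * (v ⬝ᵥ A *ᵥ v))
      = ∫ v, Real.exp (-c * (v ⬝ᵥ A *ᵥ v)) ∂(Measure.map (Matrix.toLin' U) volume) := by
        rw [hmap]
    _ = ∫ w : Fin n → ℝ, Real.exp (-c * ((Matrix.toLin' U w) ⬝ᵥ A *ᵥ (Matrix.toLin' U w))) := by
        apply MeasureTheory.integral_map
        · exact (Matrix.toLin' U).continuous_of_finiteDimensional.measurable.aemeasurable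
        · exact hcont.aestronglyMeasurable
    _ = ∫ w : Fin n → ℝ, ∏ i, Real.exp (-(c * hH.eigenvalues i) * (w i) ^ 2) := by
        congr 1; ext w
        rw [Matrix.toLin'_apply, hquad, ← Real.exp_sum]
        congr 1
        rw [Finset.mul_sum]
        exact Finset.sum_congr rfl fun i _ => by ring
    _ = ∏ i, ∫ x : ℝ, Real.exp (-(c * hH.eigenvalues i) * x ^ 2) :=
        MeasureTheory.integral_fintype_prod_eq_prod
          (fun i x => Real.exp (-(c * hH.eigenvalues i) * x ^ 2))
    _ = ∏ i, Real.sqrt (π / (c * hH.eigenvalues i)) := by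
        exact Finset.prod_congr rfl fun i _ => integral_gaussian _


theorem value_eq {θ WF : ℝ} (hθ : 0 < θ) (h : |α₁| < α₀) :
    -(θ / N) * Real.log (∫ v : Fin N → ℝ,
        Real.exp (-θ⁻¹ * (N * WF + ∑ j : Fin N,
          (α₀ * v j ^ 2 + α₁ * v j * v ⟨((j : ℕ) + 1) % N, Nat.mod_lt _ j.pos⟩))))
      = WF - θ / 2 * Real.log (π * θ) + θ / (2 * N) * Real.log ((Amat α₀ α₁ N).det) := by
  have hN : N ≠ 0 := NeZero.ne N
  have hNR : (N : ℝ) ≠ 0 := Nat.cast_ne_zero.mpr hN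
  have hA := Amat_posDef (N := N) h
  have hc : (0 : ℝ) < θ⁻¹ := inv_pos.mpr hθ
  have hidx : ∀ j : Fin N, (⟨((j : ℕ) + 1) % N, Nat.mod_lt _ j.pos⟩ : Fin N) = j + 1 := by
    intro j
    apply Fin.ext
    rw [Fin.add_def, Fin.val_one']
    exact (Nat.ModEq.add_left _ (Nat.mod_modEq 1 N)).symm
  have hint : ∀ v : Fin N → ℝ,
      Real.exp (-θ⁻¹ * (N * WF + ∑ j : Fin N,
        (α₀ * v j ^ 2 + α₁ * v j * v ⟨((j : ℕ) + 1) % N, Nat.mod_lt _ j.pos⟩)))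
      = Real.exp (-θ⁻¹ * (N * WF)) * Real.exp (-θ⁻¹ * (v ⬝ᵥ (Amat α₀ α₁ N) *ᵥ v)) := by
    intro v
    rw [← Real.exp_add]
    congr 1
    simp only [hidx]
    rw [quadform_eq]
    ring
  simp only [hint]
  rw [MeasureTheory.integral_const_mul, gauss_integral hA hc]
  have hev : ∀ i, 0 < hA.1.eigenvalues i := fun i => hA.eigenvalues_pos i
  have hfacpos : ∀ i : Fin N, 0 < π / (θ⁻¹ * hA.1.eigenvalues i) :=
    fun i => div_pos Real.pi_pos (mul_pos hc (hev i))
  have hfac : ∀ i : Fin N, 0 < Real.sqrt (π / (θ⁻¹ * hA.1.eigenvalues i)) :=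
    fun i => Real.sqrt_pos.mpr (hfacpos i)
  have hprodpos : 0 < ∏ i, Real.sqrt (π / (θ⁻¹ * hA.1.eigenvalues i)) :=
    Finset.prod_pos fun i _ => hfac i
  rw [Real.log_mul (Real.exp_ne_zero _) hprodpos.ne', Real.log_exp,
    Real.log_prod (fun i _ => (hfac i).ne')]
  have hlog : ∀ i : Fin N, Real.log (Real.sqrt (π / (θ⁻¹ * hA.1.eigenvalues i)))
      = 1 / 2 * (Real.log (π * θ) - Real.log (hA.1.eigenvalues i)) := by
    intro i
    rw [Real.log_sqrt (hfacpos i).le]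
    rw [show π / (θ⁻¹ * hA.1.eigenvalues i) = (π * θ) / hA.1.eigenvalues i by
      field_simp]
    rw [Real.log_div (by positivity) (hev i).ne']
    ring
  simp only [hlog]
  have hdet : Real.log ((Amat α₀ α₁ N).det) = ∑ x, Real.log (hA.1.eigenvalues x) := by
    rw [hA.1.det_eq_prod_eigenvalues]
    simp only [RCLike.ofReal_real_eq_id, id_eq]
    exact Real.log_prod (fun i _ => (hev i).ne')
  have hsum : ∑ x : Fin N, 1 / 2 * (Real.log (π * θ) - Real.log (hA.1.eigenvalues x))
      = (N : ℝ) / 2 * Real.log (π * θ) - 1 / 2 * Real.log ((Amat α₀ α₁ N).det) := by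
    simp only [mul_sub]
    rw [Finset.sum_sub_distrib, Finset.sum_const, Finset.card_univ, Fintype.card_fin,
      ← Finset.mul_sum, ← hdet, nsmul_eq_mul]
    ring
  rw [hsum]
  field_simp
  ring

end Stmt15

open Stmt15 Filter Real in
/-- thermodynamic limit of the free energy per atom of the
periodic harmonic chain. Indices of `v : Fin N → ℝ` are taken modulo `N`. -/
theorem stmt_15 (θ WF α₀ α₁ : ℝ) (hθ : 0 < θ) (h : |α₁| < α₀) :
    Filter.Tendsto (fun N : ℕ =>
        -(θ / N) * Real.log (∫ v : Fin N → ℝ,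
            Real.exp (-θ⁻¹ * (N * WF + ∑ j : Fin N,
              (α₀ * v j ^ 2 + α₁ * v j * v ⟨((j : ℕ) + 1) % N, Nat.mod_lt _ j.pos⟩)))))
      Filter.atTop
      (nhds (WF + θ / 2 * Real.log (1 / (Real.pi * θ)) +
        θ / 2 * Real.log ((α₀ + Real.sqrt (α₀ ^ 2 - α₁ ^ 2)) / 2))) := by
  have hα₀pos : 0 < α₀ := lt_of_le_of_lt (abs_nonneg α₁) h
  have hsub : 0 < α₀ ^ 2 - α₁ ^ 2 := by nlinarith [sq_abs α₁, abs_nonneg α₁]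
  set dd : ℝ := Real.sqrt (α₀ ^ 2 - α₁ ^ 2) with hdd
  have hdpos : 0 < dd := Real.sqrt_pos.mpr hsub
  have hd2 : dd ^ 2 = α₀ ^ 2 - α₁ ^ 2 := Real.sq_sqrt hsub.le
  set lam : ℝ := (α₀ + dd) / 2 with hlamdef
  have hlam : 0 < lam := by positivity
  set s : ℝ := Real.sqrt lam with hsdef
  have hs : 0 < s := Real.sqrt_pos.mpr hlam
  have hs2 : s ^ 2 = lam := Real.sq_sqrt hlam.le
  set t : ℝ := α₁ / (2 * s) with htdef
  have hiden : 4 * lam ^ 2 + α₁ ^ 2 = 4 * α₀ * lam := by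
    rw [hlamdef]; nlinarith [hd2]
  have ht2e : t ^ 2 = α₁ ^ 2 / (4 * lam) := by
    rw [htdef, div_pow, mul_pow, ← hs2]; ring_nf
  have h1 : s ^ 2 + t ^ 2 = α₀ := by
    rw [ht2e, hs2]
    field_simp
    linarith [hiden]
  have h2 : s * t = α₁ / 2 := by
    rw [htdef]; field_simp
  have ht2lt : t ^ 2 < s ^ 2 := by
    rw [ht2e, hs2]
    rw [div_lt_iff₀ (by positivity)]
    nlinarith [hiden, hdpos, hα₀pos, sq_abs α₁, abs_nonneg α₁]
  have htlt : |t| < s := by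
    nlinarith [sq_abs t, abs_nonneg t]
  set r : ℝ := -t / s with hrdef
  have hr : |r| < 1 := by
    rw [hrdef, abs_div, abs_neg, abs_of_pos hs]
    exact (div_lt_one hs).mpr htlt
  have hrs : -t = r * s := by rw [hrdef]; field_simp
  -- the limit of the auxiliary sequence
  have hC : Filter.Tendsto (fun N : ℕ => (WF - θ / 2 * Real.log (π * θ) + θ * Real.log s)
        + (θ / N) * Real.log (1 - r ^ N)) Filter.atTop
      (nhds (WF + θ / 2 * Real.log (1 / (Real.pi * θ)) +
        θ / 2 * Real.log ((α₀ + Real.sqrt (α₀ ^ 2 - α₁ ^ 2)) / 2))) := by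
    have hrpow : Filter.Tendsto (fun N : ℕ => r ^ N) Filter.atTop (nhds 0) :=
      tendsto_pow_atTop_nhds_zero_of_abs_lt_one hr
    have hone : Filter.Tendsto (fun N : ℕ => 1 - r ^ N) Filter.atTop (nhds 1) := by
      have := tendsto_const_nhds (α := ℕ) (f := Filter.atTop) (x := (1:ℝ)) |>.sub hrpow
      simpa using this
    have hlog0 : Filter.Tendsto (fun N : ℕ => Real.log (1 - r ^ N)) Filter.atTop (nhds 0) := by
      have := (Real.continuousAt_log one_ne_zero).tendsto.comp hone
      simpa [Function.comp_def] using this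
    have hdiv : Filter.Tendsto (fun N : ℕ => θ / (N : ℝ)) Filter.atTop (nhds 0) :=
      tendsto_const_div_atTop_nhds_zero_nat θ
    have hmul := hdiv.mul hlog0
    rw [mul_zero] at hmul
    have htot := (tendsto_const_nhds (α := ℕ) (f := Filter.atTop)
      (x := WF - θ / 2 * Real.log (π * θ) + θ * Real.log s)).add hmul
    rw [add_zero] at htot
    convert htot using 2
    have hlogs : Real.log s = 1 / 2 * Real.log lam := by
      rw [hsdef, Real.log_sqrt hlam.le]; ring
    have hloginv : Real.log (1 / (π * θ)) = -Real.log (π * θ) := by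
      rw [one_div, Real.log_inv]
    rw [hloginv, hlogs]
    ring
  -- eventual equality
  apply Filter.Tendsto.congr' _ hC
  rw [Filter.eventuallyEq_iff_exists_mem]
  refine ⟨{N | 1 ≤ N}, Filter.mem_atTop 1, ?_⟩
  intro N hN
  simp only [Set.mem_setOf_eq] at hN
  haveI : NeZero N := ⟨Nat.one_le_iff_ne_zero.mp hN⟩
  have hNR : (N : ℝ) ≠ 0 := Nat.cast_ne_zero.mpr (NeZero.ne N)
  have hone : (1 : ℝ) - r ^ N ≠ 0 := by
    have habs : |r ^ N| < 1 := by
      rw [abs_pow]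
      calc |r| ^ N ≤ |r| ^ 1 := pow_le_pow_of_le_one (abs_nonneg r) hr.le hN
        _ = |r| := pow_one _
        _ < 1 := hr
    intro h0
    have : r ^ N = 1 := by linarith
    rw [this] at habs; simp at habs
  have hsplit : s ^ N - (-t) ^ N = s ^ N * (1 - r ^ N) := by
    rw [hrs, mul_pow]; ring
  have hlogD : Real.log ((s ^ N - (-t) ^ N) ^ 2)
      = 2 * ((N : ℝ) * Real.log s + Real.log (1 - r ^ N)) := by
    rw [hsplit, Real.log_pow, Real.log_mul (pow_ne_zero N hs.ne') hone, Real.log_pow]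
    push_cast
    ring
  calc (WF - θ / 2 * Real.log (π * θ) + θ * Real.log s) + (θ / N) * Real.log (1 - r ^ N)
      = WF - θ / 2 * Real.log (π * θ)
        + θ / (2 * N) * Real.log ((s ^ N - (-t) ^ N) ^ 2) := by
        rw [hlogD]; field_simp; ring
    _ = WF - θ / 2 * Real.log (π * θ) + θ / (2 * N) * Real.log ((Amat α₀ α₁ N).det) := by
        rw [det_Amat h1 h2]
    _ = _ := (value_eq hθ h).symm
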